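/- (Proposition A11, quantitative overdispersion.) Let X be a real random variable with E[X²] < ∞ and let 𝒢 ⊆ ℋ ⊆ ℱ be nested sub-σ-algebras. Set m := E[X|ℋ] and assume m² is integrable. Suppose X satisfies the QVF property with coefficients (β₀, β₁) relative to ℋ, that β₁ > −1, and that there are constants M_min > 0 and ω₀ > 0 such that almost surely E[m²|𝒢] − (E[m|𝒢])² ≥ M_min and 0 < (β₀ + β₁·E[X|𝒢])² ≤ ω₀². Set ω := (β₀ + β₁·E[X|𝒢])⁻¹. Then almost surely ω²·Var(X|𝒢) − ω·E[X|𝒢] ≥ (1 + β₁)·M_min / ω₀². -/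

import Mathlib

open MeasureTheory

private lemma qvf_aux
    {Ω : Type*} {m0 : MeasurableSpace Ω} {μ : Measure Ω} [IsProbabilityMeasure μ]
    (𝒢 ℋ : MeasurableSpace Ω) (h𝒢ℋ : 𝒢 ≤ ℋ)
    (X : Ω → ℝ)
    (hX : Integrable X μ) (hX2 : Integrable (fun a => X a ^ 2) μ)
    (m : Ω → ℝ) (hm : m = μ[X | ℋ])
    (hm2 : Integrable (fun a => (m a) ^ 2) μ)
    (β₀ β₁ : ℝ)
    (hQVF : ∀ᵐ a ∂μ,
      (μ[fun a' => X a' ^ 2 | ℋ]) a - ((μ[X | ℋ]) a) ^ 2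
        = β₀ * (μ[X | ℋ]) a + β₁ * ((μ[X | ℋ]) a) ^ 2)
    (hβ₁ : β₁ > -1)
    (Mmin ω₀ : ℝ) (hMmin : 0 < Mmin) (hω₀ : 0 < ω₀)
    (hVarLB : ∀ᵐ a ∂μ,
      Mmin ≤ (μ[fun a' => (m a') ^ 2 | 𝒢]) a - ((μ[m | 𝒢]) a) ^ 2)
    (hωbd : ∀ᵐ a ∂μ,
      0 < (β₀ + β₁ * (μ[X | 𝒢]) a) ^ 2 ∧ (β₀ + β₁ * (μ[X | 𝒢]) a) ^ 2 ≤ ω₀ ^ 2)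
    (w : Ω → ℝ) (hw : ∀ a, w a = (β₀ + β₁ * (μ[X | 𝒢]) a)⁻¹) :
    ∀ᵐ a ∂μ,
      (1 + β₁) * Mmin / ω₀ ^ 2
        ≤ (w a) ^ 2 * ((μ[fun a' => X a' ^ 2 | 𝒢]) a - ((μ[X | 𝒢]) a) ^ 2)
            - w a * (μ[X | 𝒢]) a := by
  subst hm
  by_cases hle : ℋ ≤ m0
  · -- main case
    have htowX : μ[μ[X|ℋ]|𝒢] =ᵐ[μ] μ[X|𝒢] := condExp_condExp_of_le h𝒢ℋ hle
    have htowX2 : μ[μ[fun a' => X a' ^ 2|ℋ]|𝒢] =ᵐ[μ] μ[fun a' => X a' ^ 2|𝒢] :=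
      condExp_condExp_of_le h𝒢ℋ hle
    have hmi : Integrable (μ[X|ℋ]) μ := integrable_condExp
    have hg : μ[fun a' => X a' ^ 2|ℋ] =ᵐ[μ]
        (fun a => (1 + β₁) * ((μ[X|ℋ]) a) ^ 2 + β₀ * (μ[X|ℋ]) a) := by
      filter_upwards [hQVF] with a ha
      nlinarith [ha]
    have h1 : Integrable (fun a => (1 + β₁) * ((μ[X|ℋ]) a) ^ 2) μ := hm2.const_mul _
    have h2 : Integrable (fun a => β₀ * (μ[X|ℋ]) a) μ := hmi.const_mul _
    have hadd : μ[(fun a => (1 + β₁) * ((μ[X|ℋ]) a) ^ 2 + β₀ * (μ[X|ℋ]) a)|𝒢] =ᵐ[μ]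
        μ[(fun a => (1 + β₁) * ((μ[X|ℋ]) a) ^ 2)|𝒢] + μ[(fun a => β₀ * (μ[X|ℋ]) a)|𝒢] :=
      condExp_add (μ := μ) (m := 𝒢) h1 h2
    have hs1 : μ[(fun a => (1 + β₁) * ((μ[X|ℋ]) a) ^ 2)|𝒢] =ᵐ[μ]
        (1 + β₁) • μ[(fun a => ((μ[X|ℋ]) a) ^ 2)|𝒢] :=
      condExp_smul (μ := μ) (m := 𝒢) (1 + β₁) (fun a => ((μ[X|ℋ]) a) ^ 2)
    have hs2 : μ[(fun a => β₀ * (μ[X|ℋ]) a)|𝒢] =ᵐ[μ] β₀ • μ[μ[X|ℋ]|𝒢] :=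
      condExp_smul (μ := μ) (m := 𝒢) β₀ (μ[X|ℋ])
    have hX2G : μ[fun a' => X a' ^ 2|𝒢] =ᵐ[μ]
        (fun a => (1 + β₁) * (μ[(fun a' => ((μ[X|ℋ]) a') ^ 2)|𝒢]) a
          + β₀ * (μ[μ[X|ℋ]|𝒢]) a) := by
      refine htowX2.symm.trans ((condExp_congr_ae hg).trans (hadd.trans ?_))
      filter_upwards [hs1, hs2] with a ha hb
      simp only [Pi.add_apply] at *
      rw [ha, hb]
      simp [smul_eq_mul]
    filter_upwards [hX2G, htowX, hVarLB, hωbd] with a hE hT hV hω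
    obtain ⟨hcpos, hcle⟩ := hω
    rw [hw a, hE, hT] at *
    set u := (μ[X|𝒢]) a with hu
    set M2 := (μ[(fun a' => ((μ[X|ℋ]) a') ^ 2)|𝒢]) a with hM2
    rw [hT] at hV
    have hcne : β₀ + β₁ * u ≠ 0 := by
      intro h; rw [h] at hcpos; simp at hcpos
    have key : ((β₀ + β₁ * u)⁻¹) ^ 2 * ((1 + β₁) * M2 + β₀ * u - u ^ 2)
        - (β₀ + β₁ * u)⁻¹ * u = (1 + β₁) * (M2 - u ^ 2) / (β₀ + β₁ * u) ^ 2 := by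
      field_simp
      ring
    rw [key]
    have h1β : (0:ℝ) < 1 + β₁ := by linarith
    exact div_le_div₀ (by nlinarith) (by nlinarith) hcpos hcle
  · exfalso
    have hz : μ[X|ℋ] = 0 := condExp_of_not_le hle
    rw [hz] at hVarLB
    obtain ⟨a, ha⟩ := hVarLB.exists
    simp at ha
    have hz2 : (μ[(fun _ : Ω => (0:ℝ))|𝒢]) = 0 := condExp_zero
    exact absurd ha (not_le.mpr hMmin)

/-- **Proposition A11, quantitative overdispersion.** With nested
sub-σ-algebras `𝒢 ≤ ℋ`, `m := E[X|ℋ]`, QVF coefficients `(β₀, β₁)` with `β₁ > −1` relative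
to `ℋ`, constants `M_min > 0`, `ω₀ > 0` with, almost surely,
`E[m²|𝒢] − (E[m|𝒢])² ≥ M_min` and `0 < (β₀ + β₁·E[X|𝒢])² ≤ ω₀²`, and
`w := (β₀ + β₁·E[X|𝒢])⁻¹`, almost surely
`w²·Var(X|𝒢) − w·E[X|𝒢] ≥ (1 + β₁)·M_min / ω₀²`. -/
theorem qvf_conditional_score_quantitative
    {Ω : Type*} [MeasurableSpace Ω] {μ : Measure Ω} [IsProbabilityMeasure μ]
    (𝒢 ℋ : MeasurableSpace Ω) (h𝒢ℋ : 𝒢 ≤ ℋ) (hℋ : ℋ ≤ ‹MeasurableSpace Ω›)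
    (X : Ω → ℝ)
    (hX : Integrable X μ) (hX2 : Integrable (fun a => X a ^ 2) μ)
    (m : Ω → ℝ) (hm : m = μ[X | ℋ])
    (hm2 : Integrable (fun a => (m a) ^ 2) μ)
    (β₀ β₁ : ℝ)
    (hQVF : ∀ᵐ a ∂μ,
      (μ[fun a' => X a' ^ 2 | ℋ]) a - ((μ[X | ℋ]) a) ^ 2
        = β₀ * (μ[X | ℋ]) a + β₁ * ((μ[X | ℋ]) a) ^ 2)
    (hβ₁ : β₁ > -1)
    (Mmin ω₀ : ℝ) (hMmin : 0 < Mmin) (hω₀ : 0 < ω₀)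
    (hVarLB : ∀ᵐ a ∂μ,
      Mmin ≤ (μ[fun a' => (m a') ^ 2 | 𝒢]) a - ((μ[m | 𝒢]) a) ^ 2)
    (hωbd : ∀ᵐ a ∂μ,
      0 < (β₀ + β₁ * (μ[X | 𝒢]) a) ^ 2 ∧ (β₀ + β₁ * (μ[X | 𝒢]) a) ^ 2 ≤ ω₀ ^ 2)
    (w : Ω → ℝ) (hw : ∀ a, w a = (β₀ + β₁ * (μ[X | 𝒢]) a)⁻¹) :
    ∀ᵐ a ∂μ,
      (1 + β₁) * Mmin / ω₀ ^ 2
        ≤ (w a) ^ 2 * ((μ[fun a' => X a' ^ 2 | 𝒢]) a - ((μ[X | 𝒢]) a) ^ 2)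
            - w a * (μ[X | 𝒢]) a := by
  exact qvf_aux 𝒢 ℋ h𝒢ℋ X hX hX2 m hm hm2 β₀ β₁ hQVF hβ₁ Mmin ω₀ hMmin hω₀ hVarLB hωbd w hw
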